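/- Let ℓ ≥ 1, let γ > 0, let θ be a Borel probability measure on the unit sphere S^{ℓ−1} ⊆ ℝ^ℓ, and let μ = γ·(λ ⊗ θ) where λ is Lebesgue measure on ℝ. Then for all 0 < a < b, all r > 1 and all i ∈ {1,…,2ℓ}: μ(Ĝ_i(a, r·b)) ≥ r·μ(Ĝ_i(a,b)). -/

import Mathlib

open MeasureTheory

noncomputable section

/-- The hyperplane `H(α,u) = {x : ⟨x,u⟩ = α}` in `ℝ^ℓ`. -/
def Hplane (ℓ : ℕ) (α : ℝ) (u : EuclideanSpace ℝ (Fin ℓ)) : Set (EuclideanSpace ℝ (Fin ℓ)) :=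
  {x | (inner ℝ x u : ℝ) = α}

/-- The closed half-space `H⁻(α,u) = {x : ⟨x,u⟩ ≤ α}`. -/
def Hminus (ℓ : ℕ) (α : ℝ) (u : EuclideanSpace ℝ (Fin ℓ)) : Set (EuclideanSpace ℝ (Fin ℓ)) :=
  {x | (inner ℝ x u : ℝ) ≤ α}

/-- The closed half-space `H⁺(α,u) = {x : ⟨x,u⟩ ≥ α}`. -/
def Hplus (ℓ : ℕ) (α : ℝ) (u : EuclideanSpace ℝ (Fin ℓ)) : Set (EuclideanSpace ℝ (Fin ℓ)) :=
  {x | α ≤ (inner ℝ x u : ℝ)}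

/-- The hyperplane `H(α,u)` separates the sets `A` and `B`. -/
def Separates {ℓ : ℕ} (A B : Set (EuclideanSpace ℝ (Fin ℓ))) (α : ℝ)
    (u : EuclideanSpace ℝ (Fin ℓ)) : Prop :=
  (A ⊆ Hplus ℓ α u ∧ B ⊆ Hminus ℓ α u) ∨ (A ⊆ Hminus ℓ α u ∧ B ⊆ Hplus ℓ α u)

/-- The facet `f_i(c) = {x : x_i = c, |x_j| ≤ c for j ≠ i}` of the cube `[−c,c]^ℓ`. -/
def facetBase (ℓ : ℕ) (i : Fin ℓ) (c : ℝ) : Set (EuclideanSpace ℝ (Fin ℓ)) :=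
  {x | x i = c ∧ ∀ j, j ≠ i → |x j| ≤ c}

/-- The `2ℓ` facets of the cube `[−c,c]^ℓ`, indexed by `Fin ℓ ⊕ Fin ℓ`:
`Sum.inl i` is `f_i(c)` and `Sum.inr i` is `f_{i+ℓ}(c) = −f_i(c)`. -/
def facet (ℓ : ℕ) (i : Fin ℓ ⊕ Fin ℓ) (c : ℝ) : Set (EuclideanSpace ℝ (Fin ℓ)) :=
  match i with
  | Sum.inl i => facetBase ℓ i c
  | Sum.inr i => (fun x => -x) '' facetBase ℓ i c

/-- The unit sphere `S^{ℓ−1}` in `ℝ^ℓ`. -/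
abbrev unitSphere (ℓ : ℕ) : Set (EuclideanSpace ℝ (Fin ℓ)) :=
  Metric.sphere (0 : EuclideanSpace ℝ (Fin ℓ)) 1

/-- `Ĝ_i(a,b)`: the set of parameters `(α,u) ∈ [0,∞) × S^{ℓ−1}` such that `H(α,u)`
separates `f_i(a)` and `f_i(b)`. -/
def Ghat (ℓ : ℕ) (i : Fin ℓ ⊕ Fin ℓ) (a b : ℝ) : Set (ℝ × unitSphere ℓ) :=
  {p | 0 ≤ p.1 ∧ Separates (facet ℓ i a) (facet ℓ i b) p.1 (p.2 : EuclideanSpace ℝ (Fin ℓ))}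

/-- The hyperplane measure `μ = γ·(λ ⊗ θ)` on `ℝ × S^{ℓ−1}`. -/
def hypMeasure (ℓ : ℕ) (γ : ℝ) (θ : Measure (unitSphere ℓ)) : Measure (ℝ × unitSphere ℓ) :=
  ENNReal.ofReal γ • ((volume : Measure ℝ).prod θ)


namespace Stmt5Aux


variable {ℓ : ℕ}

def Mb (ℓ : ℕ) (k : Fin ℓ) (u : EuclideanSpace ℝ (Fin ℓ)) : ℝ :=
  u k + ∑ j ∈ Finset.univ.erase k, |u j|

def mb (ℓ : ℕ) (k : Fin ℓ) (u : EuclideanSpace ℝ (Fin ℓ)) : ℝ :=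
  u k - ∑ j ∈ Finset.univ.erase k, |u j|

lemma mb_le_Mb (k : Fin ℓ) (u : EuclideanSpace ℝ (Fin ℓ)) : mb ℓ k u ≤ Mb ℓ k u := by
  have : (0:ℝ) ≤ ∑ j ∈ Finset.univ.erase k, |u j| :=
    Finset.sum_nonneg fun j _ => abs_nonneg _
  simp only [mb, Mb]; linarith

lemma inner_eq_sum (x u : EuclideanSpace ℝ (Fin ℓ)) :
    (inner ℝ x u : ℝ) = ∑ j, x j * u j := by
  rw [PiLp.inner_apply]
  refine Finset.sum_congr rfl fun j _ => ?_
  simp only [RCLike.inner_apply, conj_trivial]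
  ring

lemma inner_facetBase {k : Fin ℓ} {c : ℝ} {x : EuclideanSpace ℝ (Fin ℓ)}
    (hx : x ∈ facetBase ℓ k c) (u : EuclideanSpace ℝ (Fin ℓ)) :
    c * mb ℓ k u ≤ (inner ℝ x u : ℝ) ∧ (inner ℝ x u : ℝ) ≤ c * Mb ℓ k u := by
  obtain ⟨hk, hj⟩ := hx
  have hsum : (inner ℝ x u : ℝ) = c * u k + ∑ j ∈ Finset.univ.erase k, x j * u j := by
    rw [inner_eq_sum, ← Finset.add_sum_erase _ _ (Finset.mem_univ k), hk]
  constructor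
  · have : ∀ j ∈ Finset.univ.erase k, -(c * |u j|) ≤ x j * u j := by
      intro j hjmem
      have hne : j ≠ k := (Finset.mem_erase.mp hjmem).1
      have h1 : |x j * u j| ≤ c * |u j| := by
        rw [abs_mul]
        exact mul_le_mul_of_nonneg_right (hj j hne) (abs_nonneg _)
      linarith [neg_abs_le (x j * u j)]
    have := Finset.sum_le_sum this
    rw [hsum, mb]
    rw [Finset.sum_neg_distrib] at this
    rw [← Finset.mul_sum] at this
    linarith
  · have : ∀ j ∈ Finset.univ.erase k, x j * u j ≤ c * |u j| := by
      intro j hjmem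
      have hne : j ≠ k := (Finset.mem_erase.mp hjmem).1
      have h1 : |x j * u j| ≤ c * |u j| := by
        rw [abs_mul]
        exact mul_le_mul_of_nonneg_right (hj j hne) (abs_nonneg _)
      linarith [le_abs_self (x j * u j)]
    have := Finset.sum_le_sum this
    rw [← Finset.mul_sum] at this
    rw [hsum, Mb]
    linarith

lemma exists_min (k : Fin ℓ) {c : ℝ} (hc : 0 < c) (u : EuclideanSpace ℝ (Fin ℓ)) :
    ∃ x ∈ facetBase ℓ k c, (inner ℝ x u : ℝ) = c * mb ℓ k u := by
  classical
  refine ⟨WithLp.toLp 2 (fun j => if j = k then c else if 0 ≤ u j then -c else c :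
    Fin ℓ → ℝ), ⟨by simp, ?_⟩, ?_⟩
  · intro j hj
    simp only [PiLp.toLp_apply, if_neg hj]
    split <;> simp [abs_of_pos hc, abs_of_neg (neg_neg_iff_pos.mpr hc), le_refl]
  · rw [inner_eq_sum, ← Finset.add_sum_erase _ _ (Finset.mem_univ k)]
    simp only [PiLp.toLp_apply, if_pos rfl]
    have : ∀ j ∈ Finset.univ.erase k,
        (if j = k then c else if 0 ≤ u j then -c else c) * u j = -(c * |u j|) := by
      intro j hjmem
      have hne : j ≠ k := (Finset.mem_erase.mp hjmem).1
      rw [if_neg hne]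
      rcases le_or_gt 0 (u j) with h | h
      · rw [if_pos h, abs_of_nonneg h]; ring
      · rw [if_neg (not_le.mpr h), abs_of_neg h]; ring
    rw [Finset.sum_congr rfl this, Finset.sum_neg_distrib, ← Finset.mul_sum, mb]
    simp only [if_true]
    ring

lemma exists_max (k : Fin ℓ) {c : ℝ} (hc : 0 < c) (u : EuclideanSpace ℝ (Fin ℓ)) :
    ∃ x ∈ facetBase ℓ k c, (inner ℝ x u : ℝ) = c * Mb ℓ k u := by
  classical
  refine ⟨WithLp.toLp 2 (fun j => if j = k then c else if 0 ≤ u j then c else -c :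
    Fin ℓ → ℝ), ⟨by simp, ?_⟩, ?_⟩
  · intro j hj
    simp only [PiLp.toLp_apply, if_neg hj]
    split <;> simp [abs_of_pos hc, abs_of_neg (neg_neg_iff_pos.mpr hc), le_refl]
  · rw [inner_eq_sum, ← Finset.add_sum_erase _ _ (Finset.mem_univ k)]
    simp only [PiLp.toLp_apply, if_pos rfl]
    have : ∀ j ∈ Finset.univ.erase k,
        (if j = k then c else if 0 ≤ u j then c else -c) * u j = c * |u j| := by
      intro j hjmem
      have hne : j ≠ k := (Finset.mem_erase.mp hjmem).1
      rw [if_neg hne]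
      rcases le_or_gt 0 (u j) with h | h
      · rw [if_pos h, abs_of_nonneg h]
      · rw [if_neg (not_le.mpr h), abs_of_neg h]; ring
    rw [Finset.sum_congr rfl this, ← Finset.mul_sum, Mb]
    simp only [if_true]
    ring

def mS (ℓ : ℕ) (i : Fin ℓ ⊕ Fin ℓ) (u : EuclideanSpace ℝ (Fin ℓ)) : ℝ :=
  match i with
  | Sum.inl k => mb ℓ k u
  | Sum.inr k => -(Mb ℓ k u)

def MS (ℓ : ℕ) (i : Fin ℓ ⊕ Fin ℓ) (u : EuclideanSpace ℝ (Fin ℓ)) : ℝ :=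
  match i with
  | Sum.inl k => Mb ℓ k u
  | Sum.inr k => -(mb ℓ k u)

lemma mS_le_MS (i : Fin ℓ ⊕ Fin ℓ) (u : EuclideanSpace ℝ (Fin ℓ)) :
    mS ℓ i u ≤ MS ℓ i u := by
  cases i with
  | inl k => exact mb_le_Mb k u
  | inr k => simpa [mS, MS] using mb_le_Mb k u

lemma base_forall_ge {k : Fin ℓ} {c : ℝ} (hc : 0 < c) (u : EuclideanSpace ℝ (Fin ℓ)) (β : ℝ) :
    (∀ x ∈ facetBase ℓ k c, β ≤ (inner ℝ x u : ℝ)) ↔ β ≤ c * mb ℓ k u := by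
  constructor
  · intro h
    obtain ⟨x, hx, hval⟩ := exists_min k hc u
    rw [← hval]; exact h x hx
  · intro h x hx
    exact h.trans (inner_facetBase hx u).1

lemma base_forall_le {k : Fin ℓ} {c : ℝ} (hc : 0 < c) (u : EuclideanSpace ℝ (Fin ℓ)) (β : ℝ) :
    (∀ x ∈ facetBase ℓ k c, (inner ℝ x u : ℝ) ≤ β) ↔ c * Mb ℓ k u ≤ β := by
  constructor
  · intro h
    obtain ⟨x, hx, hval⟩ := exists_max k hc u
    rw [← hval]; exact h x hx
  · intro h x hx
    exact (inner_facetBase hx u).2.trans h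

lemma subset_Hplus_iff (i : Fin ℓ ⊕ Fin ℓ) {c : ℝ} (hc : 0 < c) (α : ℝ)
    (u : EuclideanSpace ℝ (Fin ℓ)) :
    facet ℓ i c ⊆ Hplus ℓ α u ↔ α ≤ c * mS ℓ i u := by
  cases i with
  | inl k =>
    simp only [facet, mS, Set.subset_def, Hplus, Set.mem_setOf_eq]
    exact base_forall_ge hc u α
  | inr k =>
    rw [facet, Set.image_subset_iff]
    have h1 : (facetBase ℓ k c ⊆ (fun x => -x) ⁻¹' Hplus ℓ α u) ↔
        ∀ x ∈ facetBase ℓ k c, (inner ℝ x u : ℝ) ≤ -α := by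
      simp only [Set.subset_def, Set.mem_preimage, Hplus, Set.mem_setOf_eq, inner_neg_left]
      constructor <;> intro h x hx <;> linarith [h x hx]
    rw [h1, base_forall_le hc u, mS]
    constructor <;> intro h <;> linarith

lemma subset_Hminus_iff (i : Fin ℓ ⊕ Fin ℓ) {c : ℝ} (hc : 0 < c) (α : ℝ)
    (u : EuclideanSpace ℝ (Fin ℓ)) :
    facet ℓ i c ⊆ Hminus ℓ α u ↔ c * MS ℓ i u ≤ α := by
  cases i with
  | inl k =>
    simp only [facet, MS, Set.subset_def, Hminus, Set.mem_setOf_eq]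
    exact base_forall_le hc u α
  | inr k =>
    rw [facet, Set.image_subset_iff]
    have h1 : (facetBase ℓ k c ⊆ (fun x => -x) ⁻¹' Hminus ℓ α u) ↔
        ∀ x ∈ facetBase ℓ k c, -α ≤ (inner ℝ x u : ℝ) := by
      simp only [Set.subset_def, Set.mem_preimage, Hminus, Set.mem_setOf_eq, inner_neg_left]
      constructor <;> intro h x hx <;> linarith [h x hx]
    rw [h1, base_forall_ge hc u, MS]
    constructor <;> intro h <;> linarith

lemma ghat_eq (i : Fin ℓ ⊕ Fin ℓ) {a b : ℝ} (ha : 0 < a) (hb : 0 < b) :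
    Ghat ℓ i a b = {p : ℝ × unitSphere ℓ |
      p.1 ∈ Set.Icc (max 0 (b * MS ℓ i (p.2 : EuclideanSpace ℝ (Fin ℓ))))
          (a * mS ℓ i (p.2 : EuclideanSpace ℝ (Fin ℓ))) ∪
        Set.Icc (max 0 (a * MS ℓ i (p.2 : EuclideanSpace ℝ (Fin ℓ))))
          (b * mS ℓ i (p.2 : EuclideanSpace ℝ (Fin ℓ)))} := by
  ext ⟨α, u⟩
  simp only [Ghat, Separates, Set.mem_setOf_eq, Set.mem_union, Set.mem_Icc,
    subset_Hplus_iff i ha, subset_Hplus_iff i hb, subset_Hminus_iff i ha,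
    subset_Hminus_iff i hb, max_le_iff]
  tauto


lemma measurable_coordS (j : Fin ℓ) :
    Measurable (fun u : unitSphere ℓ => ((u : EuclideanSpace ℝ (Fin ℓ)) j)) := by
  have : Measurable (fun x : EuclideanSpace ℝ (Fin ℓ) => x j) :=
    (EuclideanSpace.proj (𝕜 := ℝ) j).continuous.measurable
  exact this.comp measurable_subtype_coe

lemma measurable_mS (i : Fin ℓ ⊕ Fin ℓ) :
    Measurable (fun u : unitSphere ℓ => mS ℓ i (u : EuclideanSpace ℝ (Fin ℓ))) := by
  have hsum : ∀ k : Fin ℓ, Measurable (fun u : unitSphere ℓ =>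
      ∑ j ∈ Finset.univ.erase k, |(u : EuclideanSpace ℝ (Fin ℓ)) j|) := fun k =>
    Finset.measurable_sum _ (fun j _ => (measurable_coordS j).abs)
  cases i with
  | inl k => exact (measurable_coordS k).sub (hsum k)
  | inr k => exact (((measurable_coordS k).add (hsum k))).neg

lemma measurable_MS (i : Fin ℓ ⊕ Fin ℓ) :
    Measurable (fun u : unitSphere ℓ => MS ℓ i (u : EuclideanSpace ℝ (Fin ℓ))) := by
  have hsum : ∀ k : Fin ℓ, Measurable (fun u : unitSphere ℓ =>
      ∑ j ∈ Finset.univ.erase k, |(u : EuclideanSpace ℝ (Fin ℓ)) j|) := fun k =>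
    Finset.measurable_sum _ (fun j _ => (measurable_coordS j).abs)
  cases i with
  | inl k => exact (measurable_coordS k).add (hsum k)
  | inr k => exact (((measurable_coordS k).sub (hsum k))).neg

lemma measurableSet_ghatSet (i : Fin ℓ ⊕ Fin ℓ) (a b : ℝ) :
    MeasurableSet {p : ℝ × unitSphere ℓ |
      p.1 ∈ Set.Icc (max 0 (b * MS ℓ i (p.2 : EuclideanSpace ℝ (Fin ℓ))))
          (a * mS ℓ i (p.2 : EuclideanSpace ℝ (Fin ℓ))) ∪
        Set.Icc (max 0 (a * MS ℓ i (p.2 : EuclideanSpace ℝ (Fin ℓ))))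
          (b * mS ℓ i (p.2 : EuclideanSpace ℝ (Fin ℓ)))} := by
  have hM : Measurable (fun p : ℝ × unitSphere ℓ =>
      MS ℓ i (p.2 : EuclideanSpace ℝ (Fin ℓ))) := (measurable_MS i).comp measurable_snd
  have hm : Measurable (fun p : ℝ × unitSphere ℓ =>
      mS ℓ i (p.2 : EuclideanSpace ℝ (Fin ℓ))) := (measurable_mS i).comp measurable_snd
  have h1 : ∀ c : ℝ, Measurable (fun p : ℝ × unitSphere ℓ =>
      max 0 (c * MS ℓ i (p.2 : EuclideanSpace ℝ (Fin ℓ)))) := fun c =>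
    measurable_const.max (measurable_const.mul hM)
  have h2 : ∀ c : ℝ, Measurable (fun p : ℝ × unitSphere ℓ =>
      c * mS ℓ i (p.2 : EuclideanSpace ℝ (Fin ℓ))) := fun c =>
    measurable_const.mul hm
  exact ((measurableSet_le (h1 b) measurable_fst).inter
      (measurableSet_le measurable_fst (h2 a))).union
    ((measurableSet_le (h1 a) measurable_fst).inter
      (measurableSet_le measurable_fst (h2 b)))

lemma key_vol (a b r m M : ℝ) (ha : 0 < a) (hab : a < b) (hr : 1 < r) (hmM : m ≤ M) :
    ENNReal.ofReal r *
      volume (Set.Icc (max 0 (b * M)) (a * m) ∪ Set.Icc (max 0 (a * M)) (b * m)) ≤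
    volume (Set.Icc (max 0 (r * b * M)) (a * m) ∪ Set.Icc (max 0 (a * M)) (r * b * m)) := by
  have h1 : volume (Set.Icc (max 0 (b * M)) (a * m)) = 0 := by
    rw [Real.volume_Icc, ENNReal.ofReal_eq_zero]
    rcases le_or_gt m 0 with h | h
    · have : a * m ≤ 0 := mul_nonpos_of_nonneg_of_nonpos ha.le h
      linarith [le_max_left (0:ℝ) (b * M)]
    · have hM : 0 < M := lt_of_lt_of_le h hmM
      have : a * m ≤ b * M := by nlinarith
      linarith [le_max_right (0:ℝ) (b * M)]
  have h2 : volume (Set.Icc (max 0 (b * M)) (a * m) ∪ Set.Icc (max 0 (a * M)) (b * m)) ≤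
      ENNReal.ofReal (b * m - max 0 (a * M)) := by
    calc volume (Set.Icc (max 0 (b * M)) (a * m) ∪ Set.Icc (max 0 (a * M)) (b * m)) ≤
        volume (Set.Icc (max 0 (b * M)) (a * m)) + volume (Set.Icc (max 0 (a * M)) (b * m)) :=
          measure_union_le _ _
      _ = ENNReal.ofReal (b * m - max 0 (a * M)) := by rw [h1, zero_add, Real.volume_Icc]
  calc ENNReal.ofReal r *
      volume (Set.Icc (max 0 (b * M)) (a * m) ∪ Set.Icc (max 0 (a * M)) (b * m)) ≤
      ENNReal.ofReal r * ENNReal.ofReal (b * m - max 0 (a * M)) := mul_le_mul_right h2 _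
    _ = ENNReal.ofReal (r * (b * m - max 0 (a * M))) :=
        (ENNReal.ofReal_mul (by linarith)).symm
    _ ≤ ENNReal.ofReal (r * b * m - max 0 (a * M)) := by
        apply ENNReal.ofReal_le_ofReal
        nlinarith [le_max_left (0:ℝ) (a * M)]
    _ = volume (Set.Icc (max 0 (a * M)) (r * b * m)) := (Real.volume_Icc).symm
    _ ≤ volume (Set.Icc (max 0 (r * b * M)) (a * m) ∪ Set.Icc (max 0 (a * M)) (r * b * m)) :=
        measure_mono Set.subset_union_right

end Stmt5Aux

/-- Superlinearity: `μ(Ĝ_i(a, r·b)) ≥ r·μ(Ĝ_i(a,b))` for `r > 1`. -/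
theorem stmt5 (ℓ : ℕ) (hℓ : 1 ≤ ℓ) (γ : ℝ) (hγ : 0 < γ)
    (θ : Measure (unitSphere ℓ)) [IsProbabilityMeasure θ]
    (a b r : ℝ) (ha : 0 < a) (hab : a < b) (hr : 1 < r) (i : Fin ℓ ⊕ Fin ℓ) :
    ENNReal.ofReal r * hypMeasure ℓ γ θ (Ghat ℓ i a b) ≤
      hypMeasure ℓ γ θ (Ghat ℓ i a (r * b)) := by
  classical
  have hb : (0:ℝ) < b := ha.trans hab
  have hrb : (0:ℝ) < r * b := by positivity
  have hGb := Stmt5Aux.ghat_eq (ℓ := ℓ) i ha hb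
  have hGrb := Stmt5Aux.ghat_eq (ℓ := ℓ) i ha hrb
  rw [hypMeasure, Measure.smul_apply, Measure.smul_apply, smul_eq_mul, smul_eq_mul,
    hGb, hGrb,
    Measure.prod_apply_symm (Stmt5Aux.measurableSet_ghatSet i a b),
    Measure.prod_apply_symm (Stmt5Aux.measurableSet_ghatSet i a (r * b))]
  have hsec : ∀ (c : ℝ) (u : unitSphere ℓ),
      ((fun x => (x, u)) ⁻¹' {p : ℝ × unitSphere ℓ |
        p.1 ∈ Set.Icc (max 0 (c * Stmt5Aux.MS ℓ i (p.2 : EuclideanSpace ℝ (Fin ℓ))))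
            (a * Stmt5Aux.mS ℓ i (p.2 : EuclideanSpace ℝ (Fin ℓ))) ∪
          Set.Icc (max 0 (a * Stmt5Aux.MS ℓ i (p.2 : EuclideanSpace ℝ (Fin ℓ))))
            (c * Stmt5Aux.mS ℓ i (p.2 : EuclideanSpace ℝ (Fin ℓ)))}) =
      Set.Icc (max 0 (c * Stmt5Aux.MS ℓ i (u : EuclideanSpace ℝ (Fin ℓ))))
          (a * Stmt5Aux.mS ℓ i (u : EuclideanSpace ℝ (Fin ℓ))) ∪
        Set.Icc (max 0 (a * Stmt5Aux.MS ℓ i (u : EuclideanSpace ℝ (Fin ℓ))))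
          (c * Stmt5Aux.mS ℓ i (u : EuclideanSpace ℝ (Fin ℓ))) := by
    intro c u; rfl
  rw [mul_left_comm]
  refine mul_le_mul_right ?_ _
  rw [← lintegral_const_mul' _ _ ENNReal.ofReal_ne_top]
  refine lintegral_mono fun u => ?_
  rw [hsec b u, hsec (r * b) u]
  exact Stmt5Aux.key_vol a b r _ _ ha hab hr (Stmt5Aux.mS_le_MS i _)


end
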